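/- Let K be a bounded operator on a Hilbert space with ‖Kf‖ < ‖f‖ for all f ≠ 0, and suppose the essential spectrum of K*K is contained in [0, 1−ε] for some ε > 0. Then ‖K‖ < 1, and consequently Id − K is invertible with (Id − K)⁻¹ = Σ_{m=0}^∞ Kᵐ, the Neumann series converging in operator norm. -/

import Mathlib

open scoped InnerProductSpace

/-- The essential spectrum: the spectrum minus the isolated eigenvalues of finite
multiplicity. -/
noncomputable def essentialSpectrum {H : Type*} [NormedAddCommGroup H]
    [InnerProductSpace ℂ H] [CompleteSpace H] (K : H →L[ℂ] H) : Set ℂ :=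
  spectrum ℂ K \
    {z | (∃ U ∈ nhds z, U ∩ spectrum ℂ K = {z}) ∧
      (∃ f : H, f ≠ 0 ∧ K f = z • f) ∧
      FiniteDimensional ℂ (LinearMap.ker ((K - z • (1 : H →L[ℂ] H) : H →L[ℂ] H) : H →ₗ[ℂ] H))}

theorem stmt_3 {H : Type*} [NormedAddCommGroup H] [InnerProductSpace ℂ H] [CompleteSpace H]
    (K : H →L[ℂ] H)
    (hcontr : ∀ f : H, f ≠ 0 → ‖K f‖ < ‖f‖)
    (ε : ℝ) (hε : 0 < ε)
    (hess : essentialSpectrum (ContinuousLinearMap.adjoint K * K) ⊆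
      {z : ℂ | ∃ x : ℝ, z = (x : ℂ) ∧ 0 ≤ x ∧ x ≤ 1 - ε}) :
    ‖K‖ < 1 ∧ ∃ S : H →L[ℂ] H, HasSum (fun m : ℕ => K ^ m) S ∧
      (1 - K) * S = 1 ∧ S * (1 - K) = 1 := by
  have hK : ‖K‖ < 1 := by
    rcases subsingleton_or_nontrivial H with hH | hH
    · have : K = 0 := Subsingleton.elim _ _
      simp [this]
    set T : H →L[ℂ] H := ContinuousLinearMap.adjoint K * K with hT
    have hsa : IsSelfAdjoint T := IsSelfAdjoint.star_mul_self K
    obtain ⟨z, hz, hzn⟩ := spectrum.exists_nnnorm_eq_spectralRadius (a := T)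
    rw [hsa.spectralRadius_eq_nnnorm] at hzn
    have hznorm : ‖z‖ = ‖T‖ := by exact_mod_cast congrArg ENNReal.toReal hzn
    have hzre : z = (z.re : ℂ) := hsa.mem_spectrum_eq_re hz
    set x : ℝ := z.re
    have hxabs : |x| = ‖T‖ := by
      rw [← hznorm, hzre]; simp [x, abs_of_nonneg]
    have hTlt : ‖T‖ < 1 := by
      by_cases hmem : z ∈ essentialSpectrum T
      · obtain ⟨y, hy, hy0, hy1⟩ := hess hmem
        have : x = y := by
          have := hzre.symm.trans hy
          exact_mod_cast this
        rw [← hxabs, this, abs_of_nonneg hy0]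
        linarith
      · have : z ∈ {w : ℂ | (∃ U ∈ nhds w, U ∩ spectrum ℂ T = {w}) ∧
            (∃ f : H, f ≠ 0 ∧ T f = w • f) ∧
            FiniteDimensional ℂ (LinearMap.ker ((T - w • (1 : H →L[ℂ] H) : H →L[ℂ] H) : H →ₗ[ℂ] H))} := by
          by_contra hc
          exact hmem ⟨hz, hc⟩
        obtain ⟨-, ⟨f, hf0, hf⟩, -⟩ := this
        -- ⟪f, T f⟫ = ‖K f‖²  and = z ‖f‖²
        have h1 : (⟪f, T f⟫_ℂ) = (‖K f‖ : ℂ) ^ 2 := by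
          rw [hT]
          simp only [ContinuousLinearMap.mul_apply, ContinuousLinearMap.adjoint_inner_right]
          rw [inner_self_eq_norm_sq_to_K]; norm_cast
        have h2 : (⟪f, T f⟫_ℂ) = z * (‖f‖ : ℂ) ^ 2 := by
          rw [hf, inner_smul_right, inner_self_eq_norm_sq_to_K]; norm_cast
        have hzr : z * (‖f‖ : ℂ) ^ 2 = (‖K f‖ : ℂ) ^ 2 := by rw [← h2, h1]
        have hx : x * ‖f‖ ^ 2 = ‖K f‖ ^ 2 := by
          have := hzr
          rw [hzre] at this
          exact_mod_cast this
        have hfpos : 0 < ‖f‖ := norm_pos_iff.mpr hf0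
        have hKf : ‖K f‖ < ‖f‖ := hcontr f hf0
        have hxlt : x < 1 := by
          nlinarith [norm_nonneg (K f)]
        have hxnn : 0 ≤ x := by nlinarith [sq_nonneg ‖K f‖, pow_pos hfpos 2]
        rw [← hxabs, abs_of_nonneg hxnn]; exact hxlt
    have hnorm : ‖T‖ = ‖K‖ * ‖K‖ := CStarRing.norm_star_mul_self
    nlinarith [norm_nonneg K]
  refine ⟨hK, ∑' m, K ^ m, (summable_geometric_of_norm_lt_one hK).hasSum, ?_, ?_⟩
  · exact mul_neg_geom_series K hK
  · exact geom_series_mul_neg K hK
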